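/- Let φⱼ, φₖ : ℝ → ℝ be C¹ phases with 0 < c ≤ φᵢ'(t) ≤ M, and τᵢⁿ the times with φᵢ(τᵢⁿ) = 2πn. Suppose the average periods agree: limₙ τⱼⁿ/n = limₙ τₖⁿ/n = T, and additionally |τᵢⁿ − nT| ≤ κᵢ for all n and i ∈ {j,k}. Then |τⱼⁿ − τₖⁿ| ≤ κⱼ + κₖ for all n, and consequently sup_t |φⱼ(t) − φₖ(t)| < ∞. -/

import Mathlib

open Real

lemma lip_aux (φ Ω : ℝ → ℝ) (M : ℝ) (hd : ∀ t, HasDerivAt φ (Ω t) t)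
    (hΩ : ∀ t, |Ω t| ≤ M) (a b : ℝ) : |φ b - φ a| ≤ M * |b - a| := by
  have := Convex.norm_image_sub_le_of_norm_hasDerivWithin_le
    (f := φ) (f' := Ω) (C := M) (s := Set.univ)
    (fun x _ => (hd x).hasDerivWithinAt) (fun x _ => hΩ x) convex_univ
    (Set.mem_univ a) (Set.mem_univ b)
  simpa using this

theorem equal_mean_periods_bounded_fluctuations_imply_PS
    (φj φk Ωj Ωk : ℝ → ℝ) (c M T κj κk : ℝ)
    (τj τk : ℕ → ℝ)
    (hdj : ∀ t, HasDerivAt φj (Ωj t) t)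
    (hdk : ∀ t, HasDerivAt φk (Ωk t) t)
    (hc : 0 < c)
    (hΩj : ∀ t, c ≤ Ωj t ∧ Ωj t ≤ M)
    (hΩk : ∀ t, c ≤ Ωk t ∧ Ωk t ≤ M)
    (hφj0 : φj 0 = 0) (hφk0 : φk 0 = 0)
    (hτj0 : ∀ n : ℕ, 0 ≤ τj n) (hτk0 : ∀ n : ℕ, 0 ≤ τk n)
    (hτj : ∀ n : ℕ, φj (τj n) = 2 * π * n)
    (hτk : ∀ n : ℕ, φk (τk n) = 2 * π * n)
    (hTj : Filter.Tendsto (fun n : ℕ => τj n / n) Filter.atTop (nhds T))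
    (hTk : Filter.Tendsto (fun n : ℕ => τk n / n) Filter.atTop (nhds T))
    (hκj : ∀ n : ℕ, |τj n - n * T| ≤ κj)
    (hκk : ∀ n : ℕ, |τk n - n * T| ≤ κk) :
    (∀ n : ℕ, |τj n - τk n| ≤ κj + κk) ∧
      ∃ C : ℝ, ∀ t : ℝ, 0 ≤ t → |φj t - φk t| ≤ C := by
  have hMc : c ≤ M := le_trans (hΩj 0).1 (hΩj 0).2
  have hM : 0 < M := lt_of_lt_of_le hc hMc
  have hΩj' : ∀ t, |Ωj t| ≤ M := fun t =>
    abs_le.2 ⟨by linarith [(hΩj t).1], (hΩj t).2⟩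
  have hΩk' : ∀ t, |Ωk t| ≤ M := fun t =>
    abs_le.2 ⟨by linarith [(hΩk t).1], (hΩk t).2⟩
  have lipj : ∀ a b, |φj b - φj a| ≤ M * |b - a| := lip_aux φj Ωj M hdj hΩj'
  have lipk : ∀ a b, |φk b - φk a| ≤ M * |b - a| := lip_aux φk Ωk M hdk hΩk'
  have hτjlb : ∀ n : ℕ, 2 * π * n ≤ M * τj n := by
    intro n
    have h := lipj 0 (τj n)
    rw [hφj0, hτj n, sub_zero, sub_zero] at h
    have h2 : (0:ℝ) ≤ 2 * π * n := by positivity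
    rwa [abs_of_nonneg h2, abs_of_nonneg (hτj0 n)] at h
  have hTge : 2 * π / M ≤ T := by
    refine ge_of_tendsto hTj ?_
    filter_upwards [Filter.eventually_ge_atTop 1] with n hn
    have hn' : (0:ℝ) < n := by exact_mod_cast hn
    rw [div_le_div_iff₀ hM hn']
    nlinarith [hτjlb n]
  have hTpos : 0 < T := lt_of_lt_of_le (by positivity) hTge
  constructor
  · intro n
    calc |τj n - τk n| = |(τj n - n * T) - (τk n - n * T)| := by ring_nf
      _ ≤ |τj n - n * T| + |τk n - n * T| := abs_sub _ _
      _ ≤ κj + κk := add_le_add (hκj n) (hκk n)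
  · refine ⟨M * (T + κj) + M * (T + κk), fun t ht => ?_⟩
    set n := ⌈t / T⌉₊ with hn
    have h1 : t / T ≤ (n : ℝ) := Nat.le_ceil _
    have h2 : (n : ℝ) < t / T + 1 := Nat.ceil_lt_add_one (div_nonneg ht hTpos.le)
    have ht1 : t ≤ n * T := (div_le_iff₀ hTpos).mp h1
    have ht2 : (n : ℝ) * T ≤ t + T := by
      have h3 : (n : ℝ) * T < (t / T + 1) * T := mul_lt_mul_of_pos_right h2 hTpos
      rw [add_mul, one_mul, div_mul_cancel₀ _ hTpos.ne'] at h3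
      linarith
    have hdistj : |t - τj n| ≤ T + κj := by
      have h3 : |t - n * T| ≤ T := abs_le.2 ⟨by linarith, by linarith⟩
      calc |t - τj n| ≤ |t - n * T| + |n * T - τj n| := abs_sub_le _ _ _
        _ ≤ T + κj := add_le_add h3 (by rw [abs_sub_comm]; exact hκj n)
    have hdistk : |t - τk n| ≤ T + κk := by
      have h3 : |t - n * T| ≤ T := abs_le.2 ⟨by linarith, by linarith⟩
      calc |t - τk n| ≤ |t - n * T| + |n * T - τk n| := abs_sub_le _ _ _
        _ ≤ T + κk := add_le_add h3 (by rw [abs_sub_comm]; exact hκk n)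
    have e1 : |φj t - φj (τj n)| ≤ M * (T + κj) :=
      le_trans (lipj (τj n) t) (by
        have := mul_le_mul_of_nonneg_left hdistj hM.le
        linarith)
    have e2 : |φk t - φk (τk n)| ≤ M * (T + κk) :=
      le_trans (lipk (τk n) t) (by
        have := mul_le_mul_of_nonneg_left hdistk hM.le
        linarith)
    calc |φj t - φk t|
        = |(φj t - φj (τj n)) - (φk t - φk (τk n))| := by
          rw [hτj n, hτk n]; ring_nf
      _ ≤ |φj t - φj (τj n)| + |φk t - φk (τk n)| := abs_sub _ _
      _ ≤ M * (T + κj) + M * (T + κk) := add_le_add e1 e2
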